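/- Let M and N be m×m complex matrices such that j(M − Mᴴ) ⪰ 0, j(N − Nᴴ) ⪰ 0, and I − NM is invertible (equivalently, I − MN is invertible). Define the 2m×2m matrix T = [[M(I−NM)⁻¹, M(I−NM)⁻¹N], [N(I−MN)⁻¹M, N(I−MN)⁻¹]]. Then j(T − Tᴴ) ⪰ 0. -/

import Mathlib

open Matrix Filter Topology ComplexOrder

private lemma auxA {R : Type*} [Ring R] (a b s s' a' b' t t' : R)
    (h1 : (1 - b*a)*s = 1) (e : t*(1 - a'*b') = 1)
    (hc1 : s'*a = a*s) (hstar1 : a'*t' = t*a') :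
    t*((a-a')*s) + (a'*t')*((b-b')*(s'*a)) = a*s - t*a' := by
  rw [hstar1, hc1]
  calc t*((a-a')*s) + (t*a')*((b-b')*(a*s))
      = (t*(1-a'*b'))*(a*s) - (t*a')*((1-b*a)*s) := by noncomm_ring
    _ = a*s - t*a' := by rw [e, h1, one_mul, mul_one]

private lemma auxB {R : Type*} [Ring R] (a b s s' a' b' t t' : R)
    (h3 : (1 - a*b)*s' = 1) (e : t*(1-a'*b') = 1) (e2 : (1-a'*b')*t = 1)
    (hc2 : s*b = b*s') (hstar1 : a'*t' = t*a') (hstar2 : t'*b' = b'*t) :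
    t*((a-a')*(s*b)) + (a'*t')*((b-b')*s') = a*(s*b) - a'*(t'*b') := by
  have L : t*((a-a')*(s*b)) + (a'*t')*((b-b')*s') = s' - t := by
    rw [hc2, hstar1]
    calc t*((a-a')*(b*s')) + (t*a')*((b-b')*s')
        = (t*(1-a'*b'))*s' - t*((1-a*b)*s') := by noncomm_ring
      _ = s' - t := by rw [e, h3, one_mul, mul_one]
  have R0 : a*(s*b) - a'*(t'*b') = s' - t := by
    rw [hc2, hstar2]
    calc a*(b*s') - a'*(b'*t)
        = (s' - (1-a*b)*s') - (t - (1-a'*b')*t) := by noncomm_ring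
      _ = s' - t := by rw [h3, e2]; noncomm_ring
  rw [L, R0]

private lemma posSemidef_fromBlocks_diag {m : ℕ} {P Q : Matrix (Fin m) (Fin m) ℂ}
    (hP : P.PosSemidef) (hQ : Q.PosSemidef) :
    (Matrix.fromBlocks P 0 0 Q).PosSemidef := by
  refine Matrix.PosSemidef.of_dotProduct_mulVec_nonneg ?_ ?_
  · rw [Matrix.IsHermitian, Matrix.fromBlocks_conjTranspose, hP.1.eq, hQ.1.eq,
      Matrix.conjTranspose_zero]
  · intro x
    rw [Matrix.fromBlocks_mulVec, Matrix.dotProduct_block]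
    simp only [Sum.elim_comp_inl, Sum.elim_comp_inr, Matrix.zero_mulVec, add_zero, zero_add]
    have h1 := hP.dotProduct_mulVec_nonneg (x ∘ Sum.inl)
    have h2 := hQ.dotProduct_mulVec_nonneg (x ∘ Sum.inr)
    have e1 : star x ∘ Sum.inl = star (x ∘ Sum.inl) := rfl
    have e2 : star x ∘ Sum.inr = star (x ∘ Sum.inr) := rfl
    rw [e1, e2]
    exact add_nonneg h1 h2

/-- The closed-loop frequency response of the positive feedback interconnection of two
negative-imaginary frequency responses is negative imaginary. -/
theorem closed_loop_freq_response_ni {m : ℕ} (M N : Matrix (Fin m) (Fin m) ℂ)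
    (hM : (Complex.I • (M - Mᴴ)).PosSemidef) (hN : (Complex.I • (N - Nᴴ)).PosSemidef)
    (hinv : IsUnit (1 - N * M)) :
    (Complex.I •
        ((Matrix.fromBlocks (M * (1 - N * M)⁻¹) (M * (1 - N * M)⁻¹ * N)
            (N * (1 - M * N)⁻¹ * M) (N * (1 - M * N)⁻¹)) -
          (Matrix.fromBlocks (M * (1 - N * M)⁻¹) (M * (1 - N * M)⁻¹ * N)
            (N * (1 - M * N)⁻¹ * M) (N * (1 - M * N)⁻¹))ᴴ)).PosSemidef := by
  -- notation
  set S := (1 - N * M)⁻¹ with hS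
  set S' := (1 - M * N)⁻¹ with hS'
  -- invertibility of 1 - M*N
  have hinv' : IsUnit (1 - M * N) := by
    refine ⟨⟨1 - M * N, 1 + M * hinv.unit.inv * N, ?_, ?_⟩, rfl⟩
    · calc (1 - M * N) * (1 + M * hinv.unit.inv * N)
          = 1 - M * N + M * ((1 - N * M) * hinv.unit.inv) * N := by noncomm_ring
        _ = 1 := by
            simp only [Units.inv_eq_val_inv, IsUnit.mul_val_inv, mul_one, sub_add_cancel]
    · calc (1 + M * hinv.unit.inv * N) * (1 - M * N)
          = 1 - M * N + M * (hinv.unit.inv * (1 - N * M)) * N := by noncomm_ring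
        _ = 1 := by
            simp only [Units.inv_eq_val_inv, IsUnit.val_inv_mul, mul_one, sub_add_cancel]
  have hdet : IsUnit (1 - N * M).det := (Matrix.isUnit_iff_isUnit_det _).mp hinv
  have hdet' : IsUnit (1 - M * N).det := (Matrix.isUnit_iff_isUnit_det _).mp hinv'
  have h1 : (1 - N * M) * S = 1 := Matrix.mul_nonsing_inv _ hdet
  have h2 : S * (1 - N * M) = 1 := Matrix.nonsing_inv_mul _ hdet
  have h3 : (1 - M * N) * S' = 1 := Matrix.mul_nonsing_inv _ hdet'
  have h4 : S' * (1 - M * N) = 1 := Matrix.nonsing_inv_mul _ hdet'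
  -- intertwining identities
  have hc1 : S' * M = M * S := by
    apply hinv'.mul_left_cancel
    rw [← mul_assoc, h3, one_mul, ← mul_assoc]
    rw [show (1 - M * N) * M = M * (1 - N * M) by noncomm_ring, mul_assoc, h1, mul_one]
  have hc2 : S * N = N * S' := by
    apply hinv.mul_left_cancel
    rw [← mul_assoc, h1, one_mul, ← mul_assoc]
    rw [show (1 - N * M) * N = N * (1 - M * N) by noncomm_ring, mul_assoc, h3, mul_one]
  -- starred versions
  have sub1 : (1 - N * M)ᴴ = 1 - Mᴴ * Nᴴ := by
    simp [Matrix.conjTranspose_sub, Matrix.conjTranspose_mul]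
  have sub2 : (1 - M * N)ᴴ = 1 - Nᴴ * Mᴴ := by
    simp [Matrix.conjTranspose_sub, Matrix.conjTranspose_mul]
  have e1 : Sᴴ * (1 - Mᴴ * Nᴴ) = 1 := by
    have := congrArg Matrix.conjTranspose h1
    simpa [Matrix.conjTranspose_mul, sub1] using this
  have e2 : (1 - Mᴴ * Nᴴ) * Sᴴ = 1 := by
    have := congrArg Matrix.conjTranspose h2
    simpa [Matrix.conjTranspose_mul, sub1] using this
  have e3 : S'ᴴ * (1 - Nᴴ * Mᴴ) = 1 := by
    have := congrArg Matrix.conjTranspose h3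
    simpa [Matrix.conjTranspose_mul, sub2] using this
  have e4 : (1 - Nᴴ * Mᴴ) * S'ᴴ = 1 := by
    have := congrArg Matrix.conjTranspose h4
    simpa [Matrix.conjTranspose_mul, sub2] using this
  have hstar1 : Mᴴ * S'ᴴ = Sᴴ * Mᴴ := by
    have := congrArg Matrix.conjTranspose hc1
    simpa [Matrix.conjTranspose_mul] using this
  have hstar2 : Nᴴ * Sᴴ = S'ᴴ * Nᴴ := by
    have := congrArg Matrix.conjTranspose hc2
    simpa [Matrix.conjTranspose_mul] using this
  clear hS hS' hdet hdet' hinv hinv' h2 h4 sub1 sub2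
  clear_value S S'
  -- the congruence factor
  set F : Matrix (Fin m ⊕ Fin m) (Fin m ⊕ Fin m) ℂ :=
    Matrix.fromBlocks S (S * N) (S' * M) S' with hF
  set D0 : Matrix (Fin m ⊕ Fin m) (Fin m ⊕ Fin m) ℂ :=
    Matrix.fromBlocks (M - Mᴴ) 0 0 (N - Nᴴ) with hD0
  have key : (Matrix.fromBlocks (M * S) (M * S * N) (N * S' * M) (N * S')) -
      (Matrix.fromBlocks (M * S) (M * S * N) (N * S' * M) (N * S'))ᴴ = Fᴴ * (D0 * F) := by
    rw [hF, hD0, Matrix.fromBlocks_conjTranspose, Matrix.fromBlocks_conjTranspose,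
      Matrix.fromBlocks_multiply, Matrix.fromBlocks_multiply, sub_eq_add_neg,
      Matrix.fromBlocks_neg, Matrix.fromBlocks_add]
    refine Matrix.fromBlocks_inj.mpr ⟨?_, ?_, ?_, ?_⟩
    · -- block (1,1)
      simp only [Matrix.conjTranspose_mul, Matrix.zero_mul, add_zero, zero_add]
      rw [auxA M N S S' Mᴴ Nᴴ Sᴴ S'ᴴ h1 e1 hc1 hstar1, sub_eq_add_neg]
    · -- block (1,2)
      simp only [Matrix.conjTranspose_mul, Matrix.zero_mul, add_zero, zero_add]
      rw [auxB M N S S' Mᴴ Nᴴ Sᴴ S'ᴴ h3 e1 e2 hc2 hstar1 hstar2.symm]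
      noncomm_ring
    · -- block (2,1)
      simp only [Matrix.conjTranspose_mul, Matrix.zero_mul, add_zero, zero_add]
      rw [add_comm (Nᴴ * Sᴴ * ((M - Mᴴ) * S)),
        auxB N M S' S Nᴴ Mᴴ S'ᴴ Sᴴ h1 e3 e4 hc1 hstar2 hstar1.symm]
      noncomm_ring
    · -- block (2,2)
      simp only [Matrix.conjTranspose_mul, Matrix.zero_mul, add_zero, zero_add]
      rw [add_comm (Nᴴ * Sᴴ * ((M - Mᴴ) * (S * N))),
        auxA N M S' S Nᴴ Mᴴ S'ᴴ Sᴴ h3 e3 hc2 hstar2, sub_eq_add_neg]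
  rw [key, show Complex.I • (Fᴴ * (D0 * F)) = Fᴴ * (Complex.I • D0) * F by
    rw [Matrix.mul_smul, Matrix.smul_mul, mul_assoc]]
  have hD0psd : (Complex.I • D0).PosSemidef := by
    rw [hD0, Matrix.fromBlocks_smul, smul_zero]
    exact posSemidef_fromBlocks_diag hM hN
  exact hD0psd.conjTranspose_mul_mul_same F
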